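/- Under conditional independence of potential outcomes and potential treatments from Z given X, the exclusion restriction, relevance, and weak monotonicity (compliers-only on one subset of covariate values, defiers-only on its complement), the conditional proportion of individuals with D(1) ≠ D(0) satisfies π(x) = |ω(x)| = c(x)·ω(x), where ω(x) = E[D | Z=1, X=x] − E[D | Z=0, X=x] and c(x) = sgn(Pr[D(1)≥D(0) | X=x] − Pr[D(1)≤D(0) | X=x]). -/
import Mathlib


open Finset

section Defs

variable {Ω 𝓧 : Type*} [Fintype Ω]

/-- Expectation of `f` under weights `p` on a finite outcome space. -/
noncomputable def pexp (p : Ω → ℝ) (f : Ω → ℝ) : ℝ := ∑ ω, p ω * f ω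

open Classical in
/-- Probability of the event `A` under weights `p`. -/
noncomputable def pprob (p : Ω → ℝ) (A : Ω → Prop) : ℝ := ∑ ω, if A ω then p ω else 0

open Classical in
/-- Conditional expectation of `f` given the event `A`. -/
noncomputable def eexp (p : Ω → ℝ) (A : Ω → Prop) (f : Ω → ℝ) : ℝ :=
  (∑ ω, if A ω then p ω * f ω else 0) / pprob p A

/-- Conditional probability of `A` given `B`. -/
noncomputable def cprob (p : Ω → ℝ) (A B : Ω → Prop) : ℝ :=
  pprob p (fun ω => A ω ∧ B ω) / pprob p B

/-- `p` is a probability vector. -/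
def IsProb (p : Ω → ℝ) : Prop := (∀ ω, 0 ≤ p ω) ∧ ∑ ω, p ω = 1

/-- Conditional expectation of `f` given `X = x`. -/
noncomputable def condMean (p : Ω → ℝ) (X : Ω → 𝓧) (f : Ω → ℝ) (x : 𝓧) : ℝ :=
  eexp p (fun ω => X ω = x) f

/-- Conditional expectation of `f` given `X = x` and `Z = z`. -/
noncomputable def condMeanOn (p : Ω → ℝ) (X : Ω → 𝓧) (Z : Ω → ℝ) (f : Ω → ℝ) (x : 𝓧) (z : ℝ) : ℝ :=
  eexp p (fun ω => X ω = x ∧ Z ω = z) f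

/-- Conditional cslope coefficient `E[f | Z=1, X=x] - E[f | Z=0, X=x]`. -/
noncomputable def cslope (p : Ω → ℝ) (X : Ω → 𝓧) (Z : Ω → ℝ) (f : Ω → ℝ) (x : 𝓧) : ℝ :=
  condMeanOn p X Z f x 1 - condMeanOn p X Z f x 0

/-- Conditional variance of `f` given the event `A`. -/
noncomputable def evVar (p : Ω → ℝ) (A : Ω → Prop) (f : Ω → ℝ) : ℝ :=
  eexp p A (fun ω => (f ω - eexp p A f) ^ 2)

/-- Conditional variance of `f` given `X = x`. -/
noncomputable def condVar (p : Ω → ℝ) (X : Ω → 𝓧) (f : Ω → ℝ) (x : 𝓧) : ℝ :=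
  evVar p (fun ω => X ω = x) f

end Defs

section Helpers

variable {Ω : Type*} [Fintype Ω]

lemma pprob_congr (p : Ω → ℝ) {A B : Ω → Prop} (h : ∀ ω, p ω ≠ 0 → (A ω ↔ B ω)) :
    pprob p A = pprob p B := by
  classical
  unfold pprob
  apply Finset.sum_congr rfl
  intro ω _
  by_cases hp : p ω = 0
  · split_ifs <;> simp [hp]
  · split_ifs with h1 h2 h2 <;> first | rfl | (exfalso; have := h ω hp; tauto)

lemma pprob_nonneg {p : Ω → ℝ} (hp : ∀ ω, 0 ≤ p ω) (A : Ω → Prop) :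
    0 ≤ pprob p A := by
  classical
  unfold pprob
  apply Finset.sum_nonneg
  intro ω _
  split_ifs <;> simp [hp ω]

lemma pprob_split (p : Ω → ℝ) (A Q : Ω → Prop) :
    pprob p (fun ω => A ω ∧ Q ω) + pprob p (fun ω => A ω ∧ ¬ Q ω) = pprob p A := by
  classical
  unfold pprob
  rw [← Finset.sum_add_distrib]
  apply Finset.sum_congr rfl
  intro ω _
  by_cases hA : A ω <;> by_cases hQ : Q ω <;> simp [hA, hQ]

lemma pprob_zero (p : Ω → ℝ) {A : Ω → Prop} (h : ∀ ω, p ω ≠ 0 → ¬ A ω) :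
    pprob p A = 0 := by
  classical
  unfold pprob
  apply Finset.sum_eq_zero
  intro ω _
  split_ifs with hA
  · by_contra hne; exact h ω hne hA
  · rfl

open Classical in
lemma num_binary (p : Ω → ℝ) (A : Ω → Prop) {f : Ω → ℝ}
    (hf : ∀ ω, f ω = 0 ∨ f ω = 1) :
    (∑ ω, if A ω then p ω * f ω else 0) = pprob p (fun ω => A ω ∧ f ω = 1) := by
  classical
  unfold pprob
  apply Finset.sum_congr rfl
  intro ω _
  by_cases hA : A ω <;> rcases hf ω with h | h <;> simp [hA, h]

open Classical in
lemma eexp_binary (p : Ω → ℝ) (A : Ω → Prop) {f : Ω → ℝ}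
    (hf : ∀ ω, f ω = 0 ∨ f ω = 1) :
    eexp p A f = pprob p (fun ω => A ω ∧ f ω = 1) / pprob p A := by
  unfold eexp pprob
  congr 1
  apply Finset.sum_congr rfl
  intro ω _
  by_cases hA : A ω <;> rcases hf ω with h | h <;> simp [hA, h]

lemma sign_self_mul (a : ℝ) : Real.sign a * a = |a| := by
  rcases lt_trichotomy a 0 with h | h | h
  · rw [Real.sign_of_neg h, abs_of_neg h]; ring
  · simp [h]
  · rw [Real.sign_of_pos h, abs_of_pos h]; ring

end Helpers

/-- Lemma 1(ii), first-stage part: under conditional independence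
of `(D(0),D(1))` and `Z` given `X`, relevance, and weak monotonicity,
`π(x) = |ω(x)| = c(x)·ω(x)` at every covariate value of positive probability. -/
theorem stmt6 {Ω 𝓧 : Type*} [Fintype Ω] (p : Ω → ℝ) (hp : IsProb p)
    (X : Ω → 𝓧) (Z D0 D1 : Ω → ℝ)
    (hZ : ∀ ω, Z ω = 0 ∨ Z ω = 1)
    (hD0 : ∀ ω, D0 ω = 0 ∨ D0 ω = 1) (hD1 : ∀ ω, D1 ω = 0 ∨ D1 ω = 1)
    -- conditional independence: (D0, D1) ⫫ Z | X
    (hindep : ∀ (x : 𝓧) (d0 d1 z : ℝ),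
      pprob p (fun ω => X ω = x ∧ D0 ω = d0 ∧ D1 ω = d1 ∧ Z ω = z) *
          pprob p (fun ω => X ω = x)
        = pprob p (fun ω => X ω = x ∧ D0 ω = d0 ∧ D1 ω = d1) *
            pprob p (fun ω => X ω = x ∧ Z ω = z))
    -- relevance
    (hrel : ∀ x : 𝓧, 0 < pprob p (fun ω => X ω = x) →
      0 < cprob p (fun ω => Z ω = 1) (fun ω => X ω = x) ∧
      cprob p (fun ω => Z ω = 1) (fun ω => X ω = x) < 1 ∧
      cprob p (fun ω => D1 ω = 1) (fun ω => X ω = x) ≠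
        cprob p (fun ω => D0 ω = 1) (fun ω => X ω = x))
    -- weak monotonicity
    (hmono : ∀ x : 𝓧,
      (∀ ω, 0 < p ω → X ω = x → D0 ω ≤ D1 ω) ∨
      (∀ ω, 0 < p ω → X ω = x → D1 ω ≤ D0 ω)) :
    ∀ x : 𝓧, 0 < pprob p (fun ω => X ω = x) →
      cprob p (fun ω => D1 ω ≠ D0 ω) (fun ω => X ω = x)
          = |cslope p X Z (fun ω => if Z ω = 1 then D1 ω else D0 ω) x| ∧
      cprob p (fun ω => D1 ω ≠ D0 ω) (fun ω => X ω = x)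
          = Real.sign (cprob p (fun ω => D0 ω ≤ D1 ω) (fun ω => X ω = x) -
                cprob p (fun ω => D1 ω ≤ D0 ω) (fun ω => X ω = x)) *
              cslope p X Z (fun ω => if Z ω = 1 then D1 ω else D0 ω) x := by
  classical
  intro x hx
  have hpn := hp.1
  have hpos : ∀ ω : Ω, p ω ≠ 0 → 0 < p ω := fun ω h => lt_of_le_of_ne (hpn ω) (Ne.symm h)
  set S := pprob p (fun ω => X ω = x) with hSdef
  obtain ⟨hz1, hz2, -⟩ := hrel x hx
  set P1 := pprob p (fun ω => X ω = x ∧ Z ω = 1) with hP1def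
  set P0 := pprob p (fun ω => X ω = x ∧ Z ω = 0) with hP0def
  -- P1 equals the numerator appearing in `cprob (Z=1) (X=x)`
  have hP1eq : pprob p (fun ω => Z ω = 1 ∧ X ω = x) = P1 :=
    pprob_congr p (fun ω _ => by tauto)
  have hP1pos : 0 < P1 := by
    have h := hz1
    unfold cprob at h
    rw [hP1eq] at h
    rcases (div_pos_iff).mp h with ⟨h1, _⟩ | ⟨_, h2⟩
    · exact h1
    · exact absurd hx (not_lt.mpr h2.le)
  -- split X by Z to get P0 + P1 = S
  have hsplitZ : P1 + P0 = S := by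
    have h := pprob_split p (fun ω => X ω = x) (fun ω => Z ω = 1)
    have h2 : pprob p (fun ω => X ω = x ∧ ¬ Z ω = 1) = P0 :=
      pprob_congr p (fun ω _ => by rcases hZ ω with h | h <;> simp [h] <;> norm_num)
    rw [h2] at h
    exact h
  have hP0pos : 0 < P0 := by
    have h := hz2
    unfold cprob at h
    rw [hP1eq] at h
    have : P1 < S := by
      have := (div_lt_one hx).mp h
      linarith
    linarith [hsplitZ]
  -- names for the key joint probabilities
  set C := pprob p (fun ω => X ω = x ∧ D0 ω = 0 ∧ D1 ω = 1) with hCdef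
  set F := pprob p (fun ω => X ω = x ∧ D0 ω = 1 ∧ D1 ω = 0) with hFdef
  set T := pprob p (fun ω => X ω = x ∧ D0 ω = 1 ∧ D1 ω = 1) with hTdef
  set Q1 := pprob p (fun ω => X ω = x ∧ D1 ω = 1) with hQ1def
  set Q0 := pprob p (fun ω => X ω = x ∧ D0 ω = 1) with hQ0def
  have hCnn : 0 ≤ C := pprob_nonneg hpn _
  have hFnn : 0 ≤ F := pprob_nonneg hpn _
  -- Q1 = C + T
  have hQ1split : Q1 = C + T := by
    have h := pprob_split p (fun ω => X ω = x ∧ D1 ω = 1) (fun ω => D0 ω = 1)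
    have h1 : pprob p (fun ω => (X ω = x ∧ D1 ω = 1) ∧ D0 ω = 1) = T :=
      pprob_congr p (fun ω _ => by tauto)
    have h2 : pprob p (fun ω => (X ω = x ∧ D1 ω = 1) ∧ ¬ D0 ω = 1) = C :=
      pprob_congr p (fun ω _ => by rcases hD0 ω with h | h <;> simp [h] <;> norm_num <;> tauto)
    rw [h1, h2] at h
    linarith
  -- Q0 = F + T
  have hQ0split : Q0 = F + T := by
    have h := pprob_split p (fun ω => X ω = x ∧ D0 ω = 1) (fun ω => D1 ω = 1)
    have h1 : pprob p (fun ω => (X ω = x ∧ D0 ω = 1) ∧ D1 ω = 1) = T :=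
      pprob_congr p (fun ω _ => by tauto)
    have h2 : pprob p (fun ω => (X ω = x ∧ D0 ω = 1) ∧ ¬ D1 ω = 1) = F :=
      pprob_congr p (fun ω _ => by rcases hD1 ω with h | h <;> simp [h] <;> norm_num <;> tauto)
    rw [h1, h2] at h
    linarith
  -- E[D | Z=1, X=x] = Q1 / S
  have hmean1 : condMeanOn p X Z (fun ω => if Z ω = 1 then D1 ω else D0 ω) x 1 = Q1 / S := by
    have hbin : ∀ ω, (if Z ω = 1 then D1 ω else D0 ω) = 0 ∨ (if Z ω = 1 then D1 ω else D0 ω) = 1 := by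
      intro ω
      by_cases h : Z ω = 1
      · rw [if_pos h]; exact hD1 ω
      · rw [if_neg h]; exact hD0 ω
    unfold condMeanOn
    rw [eexp_binary p _ hbin]
    have hred : pprob p (fun ω => (X ω = x ∧ Z ω = 1) ∧ (if Z ω = 1 then D1 ω else D0 ω) = 1)
        = pprob p (fun ω => (X ω = x ∧ Z ω = 1) ∧ D1 ω = 1) :=
      pprob_congr p (fun ω _ => by
        constructor
        · rintro ⟨ha, hd⟩; exact ⟨ha, by rwa [if_pos ha.2] at hd⟩
        · rintro ⟨ha, hd⟩; exact ⟨ha, by rwa [if_pos ha.2]⟩)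
    rw [hred]
    -- split over D0 and use independence
    have hsplit := pprob_split p (fun ω => (X ω = x ∧ Z ω = 1) ∧ D1 ω = 1) (fun ω => D0 ω = 1)
    have hA1 : pprob p (fun ω => ((X ω = x ∧ Z ω = 1) ∧ D1 ω = 1) ∧ D0 ω = 1)
        = pprob p (fun ω => X ω = x ∧ D0 ω = 1 ∧ D1 ω = 1 ∧ Z ω = 1) :=
      pprob_congr p (fun ω _ => by tauto)
    have hA0 : pprob p (fun ω => ((X ω = x ∧ Z ω = 1) ∧ D1 ω = 1) ∧ ¬ D0 ω = 1)
        = pprob p (fun ω => X ω = x ∧ D0 ω = 0 ∧ D1 ω = 1 ∧ Z ω = 1) :=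
      pprob_congr p (fun ω _ => by rcases hD0 ω with h | h <;> simp [h] <;> norm_num <;> tauto)
    rw [hA1, hA0] at hsplit
    have hi1 := hindep x 1 1 1
    have hi0 := hindep x 0 1 1
    rw [← hSdef, ← hP1def] at hi1 hi0
    rw [← hTdef] at hi1
    rw [← hCdef] at hi0
    have key : pprob p (fun ω => (X ω = x ∧ Z ω = 1) ∧ D1 ω = 1) * S = Q1 * P1 := by
      rw [← hsplit, hQ1split]; ring_nf; linarith [hi1, hi0]
    rw [div_eq_div_iff hP1pos.ne' hx.ne']
    linarith [key]
  -- E[D | Z=0, X=x] = Q0 / S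
  have hmean0 : condMeanOn p X Z (fun ω => if Z ω = 1 then D1 ω else D0 ω) x 0 = Q0 / S := by
    have hbin : ∀ ω, (if Z ω = 1 then D1 ω else D0 ω) = 0 ∨ (if Z ω = 1 then D1 ω else D0 ω) = 1 := by
      intro ω
      by_cases h : Z ω = 1
      · rw [if_pos h]; exact hD1 ω
      · rw [if_neg h]; exact hD0 ω
    unfold condMeanOn
    rw [eexp_binary p _ hbin]
    have hred : pprob p (fun ω => (X ω = x ∧ Z ω = 0) ∧ (if Z ω = 1 then D1 ω else D0 ω) = 1)
        = pprob p (fun ω => (X ω = x ∧ Z ω = 0) ∧ D0 ω = 1) :=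
      pprob_congr p (fun ω _ => by
        constructor
        · rintro ⟨ha, hd⟩; exact ⟨ha, by rwa [if_neg (by rw [ha.2]; norm_num)] at hd⟩
        · rintro ⟨ha, hd⟩; exact ⟨ha, by rwa [if_neg (by rw [ha.2]; norm_num)]⟩)
    rw [hred]
    have hsplit := pprob_split p (fun ω => (X ω = x ∧ Z ω = 0) ∧ D0 ω = 1) (fun ω => D1 ω = 1)
    have hA1 : pprob p (fun ω => ((X ω = x ∧ Z ω = 0) ∧ D0 ω = 1) ∧ D1 ω = 1)
        = pprob p (fun ω => X ω = x ∧ D0 ω = 1 ∧ D1 ω = 1 ∧ Z ω = 0) :=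
      pprob_congr p (fun ω _ => by tauto)
    have hA0 : pprob p (fun ω => ((X ω = x ∧ Z ω = 0) ∧ D0 ω = 1) ∧ ¬ D1 ω = 1)
        = pprob p (fun ω => X ω = x ∧ D0 ω = 1 ∧ D1 ω = 0 ∧ Z ω = 0) :=
      pprob_congr p (fun ω _ => by rcases hD1 ω with h | h <;> simp [h] <;> norm_num <;> tauto)
    rw [hA1, hA0] at hsplit
    have hi1 := hindep x 1 1 0
    have hi0 := hindep x 1 0 0
    rw [← hSdef, ← hP0def] at hi1 hi0
    rw [← hTdef] at hi1
    rw [← hFdef] at hi0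
    have key : pprob p (fun ω => (X ω = x ∧ Z ω = 0) ∧ D0 ω = 1) * S = Q0 * P0 := by
      rw [← hsplit, hQ0split]; ring_nf; linarith [hi1, hi0]
    rw [div_eq_div_iff hP0pos.ne' hx.ne']
    linarith [key]
  -- the slope
  have hslope : cslope p X Z (fun ω => if Z ω = 1 then D1 ω else D0 ω) x = (C - F) / S := by
    unfold cslope
    rw [hmean1, hmean0, hQ1split, hQ0split]
    ring
  -- π = (C + F) / S
  have hpi : cprob p (fun ω => D1 ω ≠ D0 ω) (fun ω => X ω = x) = (C + F) / S := by
    unfold cprob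
    rw [← hSdef]
    congr 1
    have hsplit := pprob_split p (fun ω => D1 ω ≠ D0 ω ∧ X ω = x) (fun ω => D0 ω = 1)
    have h1 : pprob p (fun ω => (D1 ω ≠ D0 ω ∧ X ω = x) ∧ D0 ω = 1) = F :=
      pprob_congr p (fun ω _ => by
        rcases hD0 ω with h0 | h0 <;> rcases hD1 ω with h1 | h1 <;>
          simp [h0, h1] <;> norm_num)
    have h2 : pprob p (fun ω => (D1 ω ≠ D0 ω ∧ X ω = x) ∧ ¬ D0 ω = 1) = C :=
      pprob_congr p (fun ω _ => by
        rcases hD0 ω with h0 | h0 <;> rcases hD1 ω with h1 | h1 <;>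
          simp [h0, h1] <;> norm_num)
    rw [h1, h2] at hsplit
    linarith
  -- sign argument equals the slope
  have hsgn : cprob p (fun ω => D0 ω ≤ D1 ω) (fun ω => X ω = x) -
      cprob p (fun ω => D1 ω ≤ D0 ω) (fun ω => X ω = x) = (C - F) / S := by
    unfold cprob
    rw [← hSdef]
    have hle1 : pprob p (fun ω => D0 ω ≤ D1 ω ∧ X ω = x) = S - F := by
      have hsplit := pprob_split p (fun ω => X ω = x) (fun ω => D0 ω ≤ D1 ω)
      have h1 : pprob p (fun ω => X ω = x ∧ D0 ω ≤ D1 ω)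
          = pprob p (fun ω => D0 ω ≤ D1 ω ∧ X ω = x) :=
        pprob_congr p (fun ω _ => by tauto)
      have h2 : pprob p (fun ω => X ω = x ∧ ¬ D0 ω ≤ D1 ω) = F :=
        pprob_congr p (fun ω _ => by
          rcases hD0 ω with h0 | h0 <;> rcases hD1 ω with h1 | h1 <;>
            simp [h0, h1] <;> norm_num)
      rw [h1, h2] at hsplit
      linarith
    have hle0 : pprob p (fun ω => D1 ω ≤ D0 ω ∧ X ω = x) = S - C := by
      have hsplit := pprob_split p (fun ω => X ω = x) (fun ω => D1 ω ≤ D0 ω)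
      have h1 : pprob p (fun ω => X ω = x ∧ D1 ω ≤ D0 ω)
          = pprob p (fun ω => D1 ω ≤ D0 ω ∧ X ω = x) :=
        pprob_congr p (fun ω _ => by tauto)
      have h2 : pprob p (fun ω => X ω = x ∧ ¬ D1 ω ≤ D0 ω) = C :=
        pprob_congr p (fun ω _ => by
          rcases hD0 ω with h0 | h0 <;> rcases hD1 ω with h1 | h1 <;>
            simp [h0, h1] <;> norm_num)
      rw [h1, h2] at hsplit
      linarith
    rw [hle1, hle0]
    ring
  -- monotonicity: one of C, F vanishes
  have hmain : cprob p (fun ω => D1 ω ≠ D0 ω) (fun ω => X ω = x)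
      = |cslope p X Z (fun ω => if Z ω = 1 then D1 ω else D0 ω) x| := by
    rw [hpi, hslope]
    rcases hmono x with hm | hm
    · have hF0 : F = 0 := by
        rw [hFdef]
        apply pprob_zero
        intro ω hne hA
        have := hm ω (hpos ω hne) hA.1
        rw [hA.2.1, hA.2.2] at this
        norm_num at this
      rw [hF0, abs_of_nonneg (div_nonneg (by linarith) hx.le)]
      ring
    · have hC0 : C = 0 := by
        rw [hCdef]
        apply pprob_zero
        intro ω hne hA
        have := hm ω (hpos ω hne) hA.1
        rw [hA.2.1, hA.2.2] at this
        norm_num at this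
      rw [hC0]
      rw [abs_of_nonpos (by
        apply div_nonpos_of_nonpos_of_nonneg _ hx.le
        linarith)]
      ring
  refine ⟨hmain, ?_⟩
  rw [hsgn, ← hslope, sign_self_mul]
  exact hmain
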